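/- Let n ≥ 1, let M be an additive subgroup of ℝⁿ that is dense in ℝⁿ and contains u = (1,1,…,1), and set M⁺ = { g ∈ M : every coordinate of g is strictly positive } ∪ {0}. Let φ : M → ℝ be an additive map with φ(g) ≥ 0 for all g ∈ M⁺ and φ(u) = 1. If (gᵢ) is a sequence in M that is increasing (i.e. gⱼ − gᵢ ∈ M⁺ whenever i < j) and converges in the Euclidean norm of ℝⁿ to an element g ∈ M, then φ(gᵢ) converges to φ(g). -/

import Mathlib

open Filter

/-- The positive cone of an additive subgroup `M` of `ℝⁿ`:
elements of `M` all of whose coordinates are strictly positive, together with `0`. -/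
def Mplus (n : ℕ) (M : AddSubgroup (EuclideanSpace ℝ (Fin n))) :
    Set (EuclideanSpace ℝ (Fin n)) :=
  {g | g ∈ M ∧ ∀ i, 0 < g i} ∪ {0}

lemma abs_coord_le_norm {n : ℕ} (v : EuclideanSpace ℝ (Fin n)) (k : Fin n) :
    |v k| ≤ ‖v‖ := by
  rw [EuclideanSpace.norm_eq]
  have h1 : |v k| = Real.sqrt (‖v k‖ ^ 2) := by
    rw [Real.norm_eq_abs, Real.sqrt_sq_eq_abs, abs_abs]
  rw [h1]
  exact Real.sqrt_le_sqrt (Finset.single_le_sum (f := fun i => ‖v i‖ ^ 2)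
    (fun i _ => sq_nonneg _) (Finset.mem_univ k))

theorem stmt15 (n : ℕ) (hn : 1 ≤ n) (M : AddSubgroup (EuclideanSpace ℝ (Fin n)))
    (hdense : Dense (M : Set (EuclideanSpace ℝ (Fin n))))
    (hu : ((WithLp.toLp 2 (fun _ => (1 : ℝ)) : EuclideanSpace ℝ (Fin n))) ∈ M)
    (φ : M →+ ℝ)
    (hpos : ∀ v : M, (v : EuclideanSpace ℝ (Fin n)) ∈ Mplus n M → 0 ≤ φ v)
    (hunit : φ ⟨(WithLp.toLp 2 (fun _ => (1 : ℝ))), hu⟩ = 1)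
    (g : ℕ → M) (gl : M)
    (hmono : ∀ i j : ℕ, i < j →
      ((g j : EuclideanSpace ℝ (Fin n)) - (g i : EuclideanSpace ℝ (Fin n))) ∈ Mplus n M)
    (hconv : Filter.Tendsto (fun i => (g i : EuclideanSpace ℝ (Fin n))) Filter.atTop
      (nhds (gl : EuclideanSpace ℝ (Fin n)))) :
    Filter.Tendsto (fun i => φ (g i)) Filter.atTop (nhds (φ gl)) := by
  classical
  set uM : M := ⟨(WithLp.toLp 2 (fun _ => (1 : ℝ))), hu⟩ with huM
  -- upper bound lemma: if all coordinates of v are < t then φ v ≤ t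
  have hφle : ∀ (v : M) (t : ℝ), (∀ k, (v : EuclideanSpace ℝ (Fin n)) k < t) → φ v ≤ t := by
    intro v t hvt
    have key : ∀ N : ℕ, φ v ≤ t + 1 / (N + 1) := by
      intro N
      set m : ℤ := ⌈((N : ℝ) + 1) * t⌉ with hm
      have hmem : (((m • uM - ((N : ℤ) + 1) • v : M)) : EuclideanSpace ℝ (Fin n))
          ∈ Mplus n M := by
        left
        refine ⟨SetLike.coe_mem _, fun k => ?_⟩
        have h1 : ((m • uM - ((N : ℤ) + 1) • v : M) : EuclideanSpace ℝ (Fin n)) k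
            = (m : ℝ) * 1 - ((N : ℝ) + 1) * (v : EuclideanSpace ℝ (Fin n)) k := by
          push_cast [AddSubgroup.coe_sub, AddSubgroup.coe_zsmul]
          simp [uM]
        rw [h1]
        have h2 : ((N : ℝ) + 1) * (v : EuclideanSpace ℝ (Fin n)) k < ((N : ℝ) + 1) * t :=
          mul_lt_mul_of_pos_left (hvt k) (by positivity)
        have h3 : ((N : ℝ) + 1) * t ≤ (m : ℝ) := Int.le_ceil _
        linarith
      have h0 := hpos _ hmem
      rw [map_sub, map_zsmul, map_zsmul, hunit] at h0
      simp only [zsmul_eq_mul, smul_eq_mul] at h0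
      have hceil : (m : ℝ) ≤ ((N : ℝ) + 1) * t + 1 := by
        have := Int.ceil_lt_add_one (((N : ℝ) + 1) * t)
        linarith
      have hN1 : (0 : ℝ) < (N : ℝ) + 1 := by positivity
      have : ((N : ℝ) + 1) * φ v ≤ ((N : ℝ) + 1) * t + 1 := by
        push_cast at h0 ⊢
        linarith
      rw [div_eq_inv_mul, ← mul_le_mul_iff_right₀ hN1]
      calc ((N : ℝ) + 1) * φ v ≤ ((N : ℝ) + 1) * t + 1 := this
        _ = ((N : ℝ) + 1) * (t + ((N : ℝ) + 1)⁻¹ * 1) := by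
            field_simp
    have hlim : Filter.Tendsto (fun N : ℕ => t + 1 / ((N : ℝ) + 1)) Filter.atTop
        (nhds (t + 0)) := tendsto_const_nhds.add tendsto_one_div_add_atTop_nhds_zero_nat
    rw [add_zero] at hlim
    exact ge_of_tendsto' hlim key
  -- coordinates of gl - g i are nonnegative
  have hcoordconv : ∀ k : Fin n, Filter.Tendsto
      (fun j => (g j : EuclideanSpace ℝ (Fin n)) k) Filter.atTop
      (nhds ((gl : EuclideanSpace ℝ (Fin n)) k)) := by
    intro k
    have hsub : Filter.Tendsto (fun j => ‖(g j : EuclideanSpace ℝ (Fin n)) - gl‖)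
        Filter.atTop (nhds 0) := by
      rw [← tendsto_sub_nhds_zero_iff] at hconv
      simpa using hconv.norm
    have hsq : Filter.Tendsto (fun j => (g j : EuclideanSpace ℝ (Fin n)) k
        - (gl : EuclideanSpace ℝ (Fin n)) k) Filter.atTop (nhds 0) := by
      apply squeeze_zero_norm _ hsub
      intro j
      have := abs_coord_le_norm ((g j : EuclideanSpace ℝ (Fin n)) - (gl : EuclideanSpace ℝ (Fin n))) k
      simpa using this
    have := hsq.add_const ((gl : EuclideanSpace ℝ (Fin n)) k)
    simpa using this
  have hdnonneg : ∀ i (k : Fin n),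
      0 ≤ ((gl : EuclideanSpace ℝ (Fin n)) - g i) k := by
    intro i k
    have hev : ∀ᶠ j in Filter.atTop,
        (g i : EuclideanSpace ℝ (Fin n)) k ≤ (g j : EuclideanSpace ℝ (Fin n)) k := by
      filter_upwards [Filter.eventually_ge_atTop (i + 1)] with j hj
      rcases hmono i j (by omega) with h | h
      · have := h.2 k
        simp only [PiLp.sub_apply] at this
        linarith
      · have : (g j : EuclideanSpace ℝ (Fin n)) - g i = 0 := h
        have hk := congrArg (fun x : EuclideanSpace ℝ (Fin n) => x k) this
        simp only [PiLp.sub_apply] at hk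
        have : (g j : EuclideanSpace ℝ (Fin n)) k
            - (g i : EuclideanSpace ℝ (Fin n)) k = 0 := hk
        linarith
    have := ge_of_tendsto (hcoordconv k) hev
    simp only [PiLp.sub_apply]
    linarith
  -- main convergence: φ (gl - g i) → 0
  have hmain : Filter.Tendsto (fun i => φ (gl - g i)) Filter.atTop (nhds 0) := by
    rw [NormedAddCommGroup.tendsto_nhds_zero]
    intro ε hε
    -- choose w ∈ M with all coordinates in (ε/3, 2ε/3)
    set uvec : EuclideanSpace ℝ (Fin n) := WithLp.toLp 2 (fun _ => (1 : ℝ)) with huvec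
    obtain ⟨w, hwball, hwM⟩ := (Metric.dense_iff.mp hdense
      ((ε / 2) • uvec) (ε / 6) (by positivity))
    have hwcoord : ∀ k : Fin n, ε / 3 < w k ∧ w k < 2 * ε / 3 := by
      intro k
      have h1 : |w k - ε / 2| ≤ ‖w - (ε / 2) • uvec‖ := by
        have := abs_coord_le_norm (w - (ε / 2) • uvec) k
        simpa [huvec, PiLp.sub_apply, PiLp.smul_apply] using this
      have h2 : ‖w - (ε / 2) • uvec‖ < ε / 6 := by
        rw [Metric.mem_ball, dist_eq_norm] at hwball
        exact hwball
      have := abs_lt.mp (lt_of_le_of_lt h1 h2)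
      constructor <;> linarith [this.1, this.2]
    set wM : M := ⟨w, hwM⟩ with hwMdef
    have hφw : φ wM ≤ 2 * ε / 3 := hφle wM (2 * ε / 3) (fun k => (hwcoord k).2)
    -- eventually ‖gl - g i‖ < ε/3
    have hnorm : ∀ᶠ i in Filter.atTop,
        ‖(gl : EuclideanSpace ℝ (Fin n)) - (g i : EuclideanSpace ℝ (Fin n))‖ < ε / 3 := by
      have h : Filter.Tendsto
          (fun i => ‖(gl : EuclideanSpace ℝ (Fin n)) - (g i : EuclideanSpace ℝ (Fin n))‖)
          Filter.atTop (nhds 0) := by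
        rw [← tendsto_sub_nhds_zero_iff] at hconv
        have h2 := hconv.norm
        simp only [norm_zero] at h2
        apply h2.congr
        intro i
        rw [norm_sub_rev]
      exact h.eventually_lt_const (by positivity)
    filter_upwards [hnorm] with i hi
    have hdk : ∀ k : Fin n, ((gl : EuclideanSpace ℝ (Fin n)) - g i) k < ε / 3 := by
      intro k
      have := abs_coord_le_norm ((gl : EuclideanSpace ℝ (Fin n)) - (g i : EuclideanSpace ℝ (Fin n))) k
      have := le_abs_self (((gl : EuclideanSpace ℝ (Fin n)) - g i) k)
      linarith [abs_coord_le_norm ((gl : EuclideanSpace ℝ (Fin n)) - (g i : EuclideanSpace ℝ (Fin n))) k]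
    -- upper bound : φ (gl - g i) ≤ φ w
    have hub : φ (gl - g i) ≤ φ wM := by
      have hmem : ((wM - (gl - g i) : M) : EuclideanSpace ℝ (Fin n)) ∈ Mplus n M := by
        left
        refine ⟨SetLike.coe_mem _, fun k => ?_⟩
        have h1 : ((wM - (gl - g i) : M) : EuclideanSpace ℝ (Fin n)) k
            = w k - ((gl : EuclideanSpace ℝ (Fin n)) - g i) k := by
          simp [wM, AddSubgroup.coe_sub, PiLp.sub_apply]
        rw [h1]
        linarith [(hwcoord k).1, hdk k]
      have := hpos _ hmem
      rw [map_sub] at this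
      linarith
    -- lower bound : -φ w ≤ φ (gl - g i)
    have hlb : -φ wM ≤ φ (gl - g i) := by
      have hmem : ((wM + (gl - g i) : M) : EuclideanSpace ℝ (Fin n)) ∈ Mplus n M := by
        left
        refine ⟨SetLike.coe_mem _, fun k => ?_⟩
        have h1 : ((wM + (gl - g i) : M) : EuclideanSpace ℝ (Fin n)) k
            = w k + ((gl : EuclideanSpace ℝ (Fin n)) - g i) k := by
          simp [wM, AddSubgroup.coe_add, PiLp.add_apply]
        rw [h1]
        linarith [(hwcoord k).1, hdnonneg i k]
      have := hpos _ hmem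
      rw [map_add] at this
      linarith
    have : |φ (gl - g i)| ≤ φ wM := abs_le.mpr ⟨by linarith, hub⟩
    calc ‖φ (gl - g i)‖ = |φ (gl - g i)| := rfl
      _ ≤ φ wM := this
      _ ≤ 2 * ε / 3 := hφw
      _ < ε := by linarith
  have : Filter.Tendsto (fun i => φ gl - φ (gl - g i)) Filter.atTop (nhds (φ gl - 0)) :=
    tendsto_const_nhds.sub hmain
  simp only [sub_zero] at this
  apply this.congr
  intro i
  rw [map_sub]
  ring
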